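/- For the two-state chain with r = 1 - p - q, every real t with |t| < 1, and every integer k ≥ 1, the generating functions satisfy G_0(t,k) = (1 - p - r t) q^{-1} G_1(t,k). -/
import Mathlib


open Matrix Finset

/-- Transition matrix of the two-state chain with parameters `p`, `q`. -/
noncomputable def twoStateP (p q : ℝ) : Matrix (Fin 2) (Fin 2) ℝ :=
  !![1 - p, p; q, 1 - q]

/-- `g2 p q i n k` is the probability that the two-state chain started at `i`
spends exactly `k` of the times `1,…,n` in state `0`. -/
noncomputable def g2 (p q : ℝ) (i : Fin 2) (n k : ℕ) : ℝ :=
  ∑ x ∈ Finset.univ.filter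
      (fun x : Fin (n + 1) → Fin 2 => x 0 = i ∧
        (Finset.univ.filter (fun m : Fin n => x m.succ = 0)).card = k),
    ∏ m : Fin n, twoStateP p q (x m.castSucc) (x m.succ)

lemma sum_decomp {N : ℕ} (F : (Fin (N + 1) → Fin 2) → ℝ) :
    ∑ x : Fin (N + 1) → Fin 2, F x
      = ∑ b : Fin 2, ∑ y : Fin N → Fin 2, F (Fin.cons b y) := by
  rw [← Equiv.sum_comp (Fin.consEquiv fun _ => Fin 2) F, Fintype.sum_prod_type]
  rfl

lemma sum_if_pull {α : Type*} [Fintype α] (c : Prop) [Decidable c] (f : α → ℝ) :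
    (∑ y : α, if c then f y else 0) = if c then ∑ y : α, f y else 0 := by
  split_ifs <;> simp

lemma g2_rec (p q : ℝ) (i : Fin 2) (n k : ℕ) :
    g2 p q i (n + 1) (k + 1) =
      twoStateP p q i 0 * g2 p q 0 n k + twoStateP p q i 1 * g2 p q 1 n (k + 1) := by
  simp only [g2, Finset.sum_filter, Finset.card_filter]
  rw [sum_decomp]
  simp only [Fin.cons_zero, Fin.cons_succ, ite_and, sum_if_pull]
  rw [Finset.sum_ite_eq' Finset.univ i]
  simp only [Finset.mem_univ, if_true]
  rw [Finset.mul_sum, Finset.mul_sum, ← Finset.sum_add_distrib]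
  refine Finset.sum_congr rfl (fun y _ => ?_)
  simp only [Fin.prod_univ_succ, Fin.sum_univ_succ, ← Fin.succ_castSucc,
    Fin.castSucc_zero, Fin.cons_zero, Fin.cons_succ]
  have h01 : y 0 = 0 ∨ y 0 = 1 := by omega
  rcases h01 with h | h <;> rw [h] <;> split_ifs <;> first | (exfalso; omega) | ring

lemma twoStateP_nonneg {p q : ℝ} (hp : p ∈ Set.Ioo (0:ℝ) 1) (hq : q ∈ Set.Ioo (0:ℝ) 1)
    (a b : Fin 2) : 0 ≤ twoStateP p q a b := by
  obtain ⟨hp1, hp2⟩ := hp; obtain ⟨hq1, hq2⟩ := hq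
  fin_cases a <;> fin_cases b <;> simp [twoStateP] <;> linarith

lemma g2_nonneg {p q : ℝ} (hp : p ∈ Set.Ioo (0:ℝ) 1) (hq : q ∈ Set.Ioo (0:ℝ) 1)
    (i : Fin 2) (n k : ℕ) : 0 ≤ g2 p q i n k := by
  refine Finset.sum_nonneg fun x _ => Finset.prod_nonneg fun m _ => ?_
  exact twoStateP_nonneg hp hq _ _

lemma g2_total (p q : ℝ) : ∀ (n : ℕ) (i : Fin 2),
      ∑ x ∈ Finset.univ.filter (fun x : Fin (n + 1) → Fin 2 => x 0 = i),
        ∏ m : Fin n, twoStateP p q (x m.castSucc) (x m.succ) = 1 := by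
  intro n
  induction n with
  | zero =>
      intro i
      simp only [Finset.sum_filter, Finset.univ_eq_empty, Finset.prod_empty]
      rw [← Fintype.sum_equiv (Equiv.funUnique (Fin 1) (Fin 2)).symm
        (fun j : Fin 2 => if j = i then (1:ℝ) else 0)
        (fun x : Fin 1 → Fin 2 => if x 0 = i then 1 else 0) (fun j => rfl)]
      simp
  | succ n ih =>
      intro i
      simp only [Finset.sum_filter]
      rw [sum_decomp]
      simp only [Fin.cons_zero, sum_if_pull]
      rw [Finset.sum_ite_eq' Finset.univ i]
      simp only [Finset.mem_univ, if_true]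
      have hprod : ∀ y : Fin (n + 1) → Fin 2, ∏ m : Fin (n + 1),
          twoStateP p q ((Fin.cons i y : Fin (n + 2) → Fin 2) m.castSucc)
            ((Fin.cons i y : Fin (n + 2) → Fin 2) m.succ)
          = twoStateP p q i (y 0) * ∏ m : Fin n, twoStateP p q (y m.castSucc) (y m.succ) := by
        intro y
        simp only [Fin.cons_succ]
        simp only [Fin.prod_univ_succ, ← Fin.succ_castSucc, Fin.castSucc_zero,
          Fin.cons_zero, Fin.cons_succ]
      rw [Finset.sum_congr rfl fun y _ => hprod y]
      rw [← Finset.sum_fiberwise Finset.univ (fun y : Fin (n + 1) → Fin 2 => y 0)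
        (fun y => twoStateP p q i (y 0) * ∏ m : Fin n, twoStateP p q (y m.castSucc) (y m.succ))]
      have hfib : ∀ j : Fin 2,
          (∑ y ∈ Finset.univ.filter (fun y : Fin (n + 1) → Fin 2 => y 0 = j),
            twoStateP p q i (y 0) * ∏ m : Fin n, twoStateP p q (y m.castSucc) (y m.succ))
          = twoStateP p q i j := by
        intro j
        rw [Finset.sum_congr rfl (fun y hy => by
          rw [(Finset.mem_filter.mp hy).2]), ← Finset.mul_sum, ih j, mul_one]
      rw [Fin.sum_univ_two, hfib 0, hfib 1]
      fin_cases i <;> simp [twoStateP]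

lemma g2_le_one {p q : ℝ} (hp : p ∈ Set.Ioo (0:ℝ) 1) (hq : q ∈ Set.Ioo (0:ℝ) 1)
    (i : Fin 2) (n k : ℕ) : g2 p q i n k ≤ 1 := by
  rw [← g2_total p q n i]
  refine Finset.sum_le_sum_of_subset_of_nonneg ?_ ?_
  · intro x hx
    simp only [Finset.mem_filter] at hx ⊢
    exact ⟨hx.1, hx.2.1⟩
  · intro x _ _
    exact Finset.prod_nonneg fun m _ => twoStateP_nonneg hp hq _ _

lemma g2_zero_of_lt (p q : ℝ) (i : Fin 2) {n k : ℕ} (h : n < k) : g2 p q i n k = 0 := by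
  refine Finset.sum_eq_zero fun x hx => ?_
  exfalso
  have := (Finset.mem_filter.mp hx).2.2
  have hle : (Finset.univ.filter (fun m : Fin n => x m.succ = 0)).card ≤ n := by
    simpa using Finset.card_filter_le Finset.univ (fun m : Fin n => x m.succ = 0)
  omega

theorem stmt13 (p q : ℝ) (hp : p ∈ Set.Ioo (0 : ℝ) 1) (hq : q ∈ Set.Ioo (0 : ℝ) 1)
    (r : ℝ) (hr : r = 1 - p - q) (t : ℝ) (ht : |t| < 1) (k : ℕ) (hk : 1 ≤ k) :
    (∑' n : ℕ, g2 p q 0 (n + k) k * t ^ n) =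
      (1 - p - r * t) * q⁻¹ * ∑' n : ℕ, g2 p q 1 (n + k) k * t ^ n := by
  obtain ⟨k', rfl⟩ : ∃ k', k = k' + 1 := ⟨k - 1, by omega⟩
  have hsum : ∀ (i : Fin 2) (m j : ℕ), Summable (fun n : ℕ => g2 p q i (n + m) j * t ^ n) := by
    intro i m j
    refine Summable.of_abs (Summable.of_nonneg_of_le (fun n => abs_nonneg _) (fun n => ?_)
      (summable_geometric_of_lt_one (abs_nonneg t) ht))
    rw [abs_mul, abs_pow]
    calc |g2 p q i (n + m) j| * |t| ^ n ≤ 1 * |t| ^ n := by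
          refine mul_le_mul_of_nonneg_right ?_ (by positivity)
          rw [abs_le]
          exact ⟨by linarith [g2_nonneg hp hq i (n+m) j], g2_le_one hp hq i (n+m) j⟩
      _ = |t| ^ n := one_mul _
  set A' := ∑' n : ℕ, g2 p q 0 (n + k') k' * t ^ n with hA'
  set B := ∑' n : ℕ, g2 p q 1 (n + (k' + 1)) (k' + 1) * t ^ n with hB
  have hC : (∑' n : ℕ, g2 p q 1 (n + k') (k' + 1) * t ^ n) = t * B := by
    rw [Summable.tsum_eq_zero_add (hsum 1 k' (k' + 1))]
    rw [g2_zero_of_lt p q 1 (by omega : (0:ℕ) + k' < k' + 1)]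
    rw [tsum_congr (fun n : ℕ => show g2 p q 1 (n + 1 + k') (k' + 1) * t ^ (n + 1)
        = t * (g2 p q 1 (n + (k' + 1)) (k' + 1) * t ^ n) by
      rw [show n + 1 + k' = n + (k' + 1) by omega]; ring)]
    rw [tsum_mul_left, ← hB]
    ring
  have hrec : ∀ (i : Fin 2) (n : ℕ), g2 p q i (n + (k' + 1)) (k' + 1) * t ^ n
      = twoStateP p q i 0 * (g2 p q 0 (n + k') k' * t ^ n)
        + twoStateP p q i 1 * (g2 p q 1 (n + k') (k' + 1) * t ^ n) := by
    intro i n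
    rw [show n + (k' + 1) = (n + k') + 1 by omega, g2_rec]
    ring
  have hP00 : twoStateP p q 0 0 = 1 - p := by simp [twoStateP]
  have hP01 : twoStateP p q 0 1 = p := by simp [twoStateP]
  have hP10 : twoStateP p q 1 0 = q := by simp [twoStateP]
  have hP11 : twoStateP p q 1 1 = 1 - q := by simp [twoStateP]
  have hA : (∑' n : ℕ, g2 p q 0 (n + (k' + 1)) (k' + 1) * t ^ n)
      = (1 - p) * A' + p * (t * B) := by
    rw [tsum_congr (hrec 0)]
    rw [Summable.tsum_add ((hsum 0 k' k').mul_left _) ((hsum 1 k' (k' + 1)).mul_left _)]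
    rw [tsum_mul_left, tsum_mul_left, hC, ← hA', hP00, hP01]
  have hBeq : B = q * A' + (1 - q) * (t * B) := by
    conv_lhs => rw [hB]
    rw [tsum_congr (hrec 1)]
    rw [Summable.tsum_add ((hsum 0 k' k').mul_left _) ((hsum 1 k' (k' + 1)).mul_left _)]
    rw [tsum_mul_left, tsum_mul_left, hC, ← hA', hP10, hP11]
  have hq0 : q ≠ 0 := ne_of_gt hq.1
  have hA'val : A' = (1 - (1 - q) * t) * B / q := by
    field_simp
    linarith [hBeq]
  rw [hA, hA'val, hr]
  field_simp
  ring
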